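/- arXiv:0905.0556 — 2 statements merged into one kernel-verified Lean document; each statement's English description precedes it below -/
import Mathlib

section
/- Fix integers k ≥ 2 and 1 ≤ j ≤ k−1. Let u_1,…,u_k and v_1,…,v_k be indeterminates with the conventions u_k = 1, u_{k−1} = 0, v_k = 0, and u_r = v_r = 0 for r ≤ 0 and for r > k. Then, as polynomials in y (with coefficients polynomials in the u's and v's), one has the identity: Σ_{i=1}^{k−1} Σ_{r=1}^{i−1} (u_{i+j−r} v_r − u_r v_{i+j−r}) y^i − Σ_{i=1}^{k} Σ_{r=1}^{k−1} (u_{r+j} v_i − u_i v_{r+j}) y^{i+r} + v_j y^k = 0. -/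
open Finset

/-- For `k ≥ 2` and `1 ≤ j ≤ k−1`, with the conventions
`u_k = 1`, `u_{k−1} = 0`, `v_k = 0`, and `u_r = v_r = 0` for `r ≤ 0` or `r > k`
(indices in `ℕ`, so `r ≤ 0` means `r = 0`), one has, for elements `u_r, v_r, y`
of a commutative ring (in particular for indeterminates of a polynomial ring):
`Σ_{i=1}^{k−1} Σ_{r=1}^{i−1} (u_{i+j−r} v_r − u_r v_{i+j−r}) y^i
 − Σ_{i=1}^{k} Σ_{r=1}^{k−1} (u_{r+j} v_i − u_i v_{r+j}) y^{i+r} + v_j y^k = 0`. -/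
theorem first_family_key_identity {R : Type*} [CommRing R]
    (k j : ℕ) (hk : 2 ≤ k) (hj1 : 1 ≤ j) (hj2 : j ≤ k - 1)
    (u v : ℕ → R) (y : R)
    (huk : u k = 1) (hukm1 : u (k - 1) = 0) (hvk : v k = 0)
    (hu0 : u 0 = 0) (hv0 : v 0 = 0)
    (hu : ∀ r, k < r → u r = 0) (hv : ∀ r, k < r → v r = 0) :
    (∑ i ∈ Icc 1 (k - 1), ∑ r ∈ Icc 1 (i - 1),
        (u (i + j - r) * v r - u r * v (i + j - r)) * y ^ i)
      - (∑ i ∈ Icc 1 k, ∑ r ∈ Icc 1 (k - 1),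
          (u (r + j) * v i - u i * v (r + j)) * y ^ (i + r))
      + v j * y ^ k = 0 := by
  classical
  set f : ℕ × ℕ → R := fun p => (u (p.1 + j) * v p.2 - u p.2 * v (p.1 + j)) * y ^ (p.1 + p.2)
    with hfdef
  set T : Finset (ℕ × ℕ) := ((Icc 1 (k - 1)) ×ˢ (Icc 1 k)).filter (fun p => p.1 + p.2 ≤ k - 1)
    with hTdef
  set E : Finset (ℕ × ℕ) := ((Icc 1 (k - 1)) ×ˢ (Icc 1 k)).filter (fun p => ¬ p.1 + p.2 ≤ k - 1)
    with hEdef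
  -- Step 1: first double sum is a sum over the triangle T
  have hS1 : (∑ i ∈ Icc 1 (k - 1), ∑ r ∈ Icc 1 (i - 1),
      (u (i + j - r) * v r - u r * v (i + j - r)) * y ^ i) = ∑ p ∈ T, f p := by
    rw [Finset.sum_sigma']
    refine Finset.sum_nbij' (fun a => (a.1 - a.2, a.2)) (fun q => ⟨q.1 + q.2, q.2⟩)
      ?_ ?_ ?_ ?_ ?_
    · rintro ⟨a1, a2⟩ ha
      simp only [Finset.mem_sigma, Finset.mem_Icc] at ha
      simp only [hTdef, Finset.mem_filter, Finset.mem_product, Finset.mem_Icc]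
      omega
    · rintro ⟨q1, q2⟩ hq
      simp only [hTdef, Finset.mem_filter, Finset.mem_product, Finset.mem_Icc] at hq
      simp only [Finset.mem_sigma, Finset.mem_Icc]
      omega
    · rintro ⟨a1, a2⟩ ha
      simp only [Finset.mem_sigma, Finset.mem_Icc] at ha
      dsimp only
      rw [show a1 - a2 + a2 = a1 by omega]
    · rintro ⟨q1, q2⟩ hq
      simp only [hTdef, Finset.mem_filter, Finset.mem_product, Finset.mem_Icc] at hq
      dsimp only
      rw [show q1 + q2 - q2 = q1 by omega]
    · rintro ⟨a1, a2⟩ ha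
      simp only [Finset.mem_sigma, Finset.mem_Icc] at ha
      simp only [hfdef]
      rw [show a1 + j - a2 = a1 - a2 + j by omega, show a1 - a2 + a2 = a1 by omega]
  -- Step 2: second double sum is a sum over the rectangle
  have hS2 : ∑ p ∈ (Icc 1 (k - 1)) ×ˢ (Icc 1 k), f p
      = ∑ i ∈ Icc 1 k, ∑ r ∈ Icc 1 (k - 1),
          (u (r + j) * v i - u i * v (r + j)) * y ^ (i + r) := by
    rw [Finset.sum_product, Finset.sum_comm]
    refine Finset.sum_congr rfl fun i _ => Finset.sum_congr rfl fun r _ => ?_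
    simp only [hfdef]
    rw [add_comm r i]
  -- Step 3: rectangle = triangle + excess
  have hsplit : ∑ p ∈ (Icc 1 (k - 1)) ×ˢ (Icc 1 k), f p = ∑ p ∈ T, f p + ∑ p ∈ E, f p :=
    (Finset.sum_filter_add_sum_filter_not _ _ _).symm
  -- Step 4: the excess sum equals v j * y ^ k
  have hE : ∑ p ∈ E, f p = v j * y ^ k := by
    have hEsplit : ∑ p ∈ E, f p
        = ∑ p ∈ E.filter (fun p => p.2 = k), f p
          + ∑ p ∈ E.filter (fun p => ¬ p.2 = k), f p :=
      (Finset.sum_filter_add_sum_filter_not _ _ _).symm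
    have hEBsplit : ∑ p ∈ E.filter (fun p => ¬ p.2 = k), f p
        = ∑ p ∈ (E.filter (fun p => ¬ p.2 = k)).filter (fun p => k ≤ p.1 + j), f p
          + ∑ p ∈ (E.filter (fun p => ¬ p.2 = k)).filter (fun p => ¬ k ≤ p.1 + j), f p :=
      (Finset.sum_filter_add_sum_filter_not _ _ _).symm
    -- the i = k row
    have hEA : ∑ p ∈ E.filter (fun p => p.2 = k), f p
        = ∑ r ∈ Icc 1 (k - 1 - j), (-(v (r + j) * y ^ (r + k))) := by
      have h1 : ∑ p ∈ E.filter (fun p => p.2 = k), f p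
          = ∑ r ∈ Icc 1 (k - 1), (-(v (r + j) * y ^ (r + k))) := by
        refine Finset.sum_nbij' (fun p => p.1) (fun r => (r, k)) ?_ ?_ ?_ ?_ ?_
        · rintro ⟨p1, p2⟩ hp
          simp only [hEdef, Finset.mem_filter, Finset.mem_product, Finset.mem_Icc] at hp
          simp only [Finset.mem_Icc]
          omega
        · intro r hr
          simp only [Finset.mem_Icc] at hr
          simp only [hEdef, Finset.mem_filter, Finset.mem_product, Finset.mem_Icc,
            and_true, true_and, eq_self_iff_true]
          omega
        · rintro ⟨p1, p2⟩ hp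
          simp only [hEdef, Finset.mem_filter, Finset.mem_product, Finset.mem_Icc] at hp
          simp only [Prod.mk.injEq, true_and]
          omega
        · intro r hr; rfl
        · rintro ⟨p1, p2⟩ hp
          simp only [hEdef, Finset.mem_filter, Finset.mem_product, Finset.mem_Icc] at hp
          simp only [hfdef]
          rw [show p2 = k by omega, hvk, huk]
          ring
      rw [h1]
      refine (Finset.sum_subset (Finset.Icc_subset_Icc le_rfl (by omega)) ?_).symm
      intro x hx hx'
      simp only [Finset.mem_Icc] at hx hx'
      have hxk : k ≤ x + j := by omega
      have hvz : v (x + j) = 0 := by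
        rcases Nat.lt_or_ge k (x + j) with h | h
        · exact hv _ h
        · rw [show x + j = k by omega]; exact hvk
      rw [hvz]; ring
    -- the r + j = k column (minus the i = k corner)
    have hEB1 : ∑ p ∈ (E.filter (fun p => ¬ p.2 = k)).filter (fun p => k ≤ p.1 + j), f p
        = ∑ i ∈ Icc j (k - 1), v i * y ^ (k - j + i) := by
      have h0 : ∑ p ∈ (E.filter (fun p => ¬ p.2 = k)).filter (fun p => k ≤ p.1 + j), f p
          = ∑ p ∈ ((E.filter (fun p => ¬ p.2 = k)).filter (fun p => k ≤ p.1 + j)).filter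
              (fun p => p.1 + j = k), f p := by
        refine (Finset.sum_subset (Finset.filter_subset _ _) ?_).symm
        intro p hp hp'
        simp only [Finset.mem_filter] at hp hp'
        have hlt : k < p.1 + j := by
          rcases Nat.lt_or_ge k (p.1 + j) with h | h
          · exact h
          · exact absurd ⟨hp, by omega⟩ hp'
        simp only [hfdef]
        rw [hu _ hlt, hv _ hlt]
        ring
      rw [h0]
      refine Finset.sum_nbij' (fun p => p.2) (fun i => (k - j, i)) ?_ ?_ ?_ ?_ ?_
      · rintro ⟨p1, p2⟩ hp
        simp only [hEdef, Finset.mem_filter, Finset.mem_product, Finset.mem_Icc] at hp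
        simp only [Finset.mem_Icc]
        omega
      · intro i hi
        simp only [Finset.mem_Icc] at hi
        simp only [hEdef, Finset.mem_filter, Finset.mem_product, Finset.mem_Icc]
        omega
      · rintro ⟨p1, p2⟩ hp
        simp only [hEdef, Finset.mem_filter, Finset.mem_product, Finset.mem_Icc] at hp
        simp only [Prod.mk.injEq, and_true]
        omega
      · intro i hi; rfl
      · rintro ⟨p1, p2⟩ hp
        simp only [hEdef, Finset.mem_filter, Finset.mem_product, Finset.mem_Icc] at hp
        simp only [hfdef]
        rw [show p1 + j = k by omega, huk, hvk, show p1 = k - j by omega]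
        ring
    -- peel off the i = j term and reindex
    have hEB1' : ∑ i ∈ Icc j (k - 1), v i * y ^ (k - j + i)
        = v j * y ^ k + ∑ r ∈ Icc 1 (k - 1 - j), v (r + j) * y ^ (r + k) := by
      have hins : Icc j (k - 1) = insert j (Icc (j + 1) (k - 1)) := by
        ext x; simp only [Finset.mem_Icc, Finset.mem_insert]; omega
      rw [hins, Finset.sum_insert (by simp only [Finset.mem_Icc]; omega)]
      congr 1
      · rw [show k - j + j = k by omega]
      · refine Finset.sum_nbij' (fun i => i - j) (fun r => r + j) ?_ ?_ ?_ ?_ ?_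
        · intro a ha; simp only [Finset.mem_Icc] at ha ⊢; omega
        · intro a ha; simp only [Finset.mem_Icc] at ha ⊢; omega
        · intro a ha; simp only [Finset.mem_Icc] at ha; omega
        · intro a ha; simp only [Finset.mem_Icc] at ha; omega
        · intro a ha
          simp only [Finset.mem_Icc] at ha
          rw [show a - j + j = a by omega, show a - j + k = k - j + a by omega]
    -- the generic part cancels by an involution
    have hEB2 : ∑ p ∈ (E.filter (fun p => ¬ p.2 = k)).filter (fun p => ¬ k ≤ p.1 + j), f p
        = 0 := by
      refine Finset.sum_involution (fun p _ => (p.2 - j, p.1 + j)) ?_ ?_ ?_ ?_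
      · rintro ⟨p1, p2⟩ hp
        simp only [hEdef, Finset.mem_filter, Finset.mem_product, Finset.mem_Icc] at hp
        simp only [hfdef]
        rw [show p2 - j + j = p2 by omega, show p2 - j + (p1 + j) = p1 + p2 by omega]
        ring
      · rintro ⟨p1, p2⟩ hp hne heq
        simp only [Prod.mk.injEq] at heq
        apply hne
        simp only [hfdef]
        rw [heq.2]
        ring
      · rintro ⟨p1, p2⟩ hp
        simp only [hEdef, Finset.mem_filter, Finset.mem_product, Finset.mem_Icc] at hp ⊢
        omega
      · rintro ⟨p1, p2⟩ hp
        simp only [hEdef, Finset.mem_filter, Finset.mem_product, Finset.mem_Icc] at hp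
        simp only [Prod.mk.injEq]
        omega
    rw [hEsplit, hEBsplit, hEA, hEB1, hEB1', hEB2]
    rw [Finset.sum_neg_distrib]
    ring
  rw [hS1, ← hS2, hsplit, hE]
  ring
end

section
/- For k ≥ 2 and 1 ≤ j ≤ k−1, define vector fields on K^{2k−1} (coordinates U_1,…,U_{k−2}, V_1,…,V_{k−1}, W_1, W_2, with conventions U_{k−1} = V_k = 0, U_k = 1, U_r = V_r = 0 for r ≤ 0 or r > k) by components: Ã_i = 0 (1 ≤ i ≤ k−2), B̃_i = k Σ_{r=1}^{i−1} U_{i+j−r} V_r − k Σ_{r=1}^{i} U_r V_{i+j−r} − (k−1)(k−j) U_j V_i + k V_{i+j} W_1 − k U_{i+j} W_2 (1 ≤ i ≤ k−1), C̃_1 = 0, C̃_2 = −k V_j W_1 − (k−1)(k−j) U_j W_2. Then this vector field ξ̃_j is liftable over the minimal cross cap map φ_k, with lowerable field η_j having components a_i = 0, b_i = B̃_i ∘ φ_k-substitution (i.e. b_i obtained from B̃_i by replacing U_r ↦ u_r, V_r ↦ v_r, W_1 ↦ y^k + Σ u_i y^i, W_2 ↦ Σ v_i y^i), and c = 0. 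-/
open MvPolynomial Finset

/-! STATEMENT 12: the vector field `ξ̃_j` (the first family minus a multiple of the
Euler field, as in the proof of Theorem `firstfamily`) is liftable over the minimal
cross cap map `φ_k`, with the indicated lowerable field.

We model `φ_k` as a polynomial map: domain variables are `u_1,…,u_{k−2}`,
`v_1,…,v_{k−1}`, `y` (type `CCDom k`), target variables `U_1,…,U_{k−2}`,
`V_1,…,V_{k−1}`, `W_1`, `W_2` (type `CCTgt k`).  The Jacobian of a polynomial map
is the matrix of partial derivatives `pderiv`, and the liftability equation
`Dφ_k · η = ξ ∘ φ_k` reads, coordinatewise in the target: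
`∑ s, ∂(φ_k)_m/∂x_s · η_s = (aeval φ_k) (ξ_m)`. -/

/-- Domain variable index set: `u`'s, `v`'s and `y`. -/
abbrev CCDom (k : ℕ) := Sum (Fin (k - 2)) (Sum (Fin (k - 1)) Unit)

/-- Target variable index set: `U`'s, `V`'s and `W₁, W₂`. -/
abbrev CCTgt (k : ℕ) := Sum (Fin (k - 2)) (Sum (Fin (k - 1)) (Fin 2))

section Defs

variable (K : Type*) [Field K] (k : ℕ)

/-- `u_r` in the domain, with dummy conventions `u_k = 1`, and `u_r = 0` for
`r = k−1`, `r ≤ 0` or `r > k`. -/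
noncomputable def ccu (r : ℕ) : MvPolynomial (CCDom k) K :=
  if h : 1 ≤ r ∧ r ≤ k - 2 then X (Sum.inl ⟨r - 1, by omega⟩)
  else if r = k then 1 else 0

/-- `v_r` in the domain, with `v_r = 0` for `r ≤ 0` or `r ≥ k`. -/
noncomputable def ccv (r : ℕ) : MvPolynomial (CCDom k) K :=
  if h : 1 ≤ r ∧ r ≤ k - 1 then X (Sum.inr (Sum.inl ⟨r - 1, by omega⟩)) else 0

/-- The domain variable `y`. -/
noncomputable def ccy : MvPolynomial (CCDom k) K := X (Sum.inr (Sum.inr ()))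

/-- The minimal cross cap map `φ_k` of multiplicity `k`, as a family of polynomials
in the domain variables, indexed by the target coordinates. -/
noncomputable def crossCap : CCTgt k → MvPolynomial (CCDom k) K :=
  Sum.elim (fun i => ccu K k (i + 1))
    (Sum.elim (fun i => ccv K k (i + 1))
      (fun w =>
        if w = (0 : Fin 2) then
          ccy K k ^ k + ∑ i ∈ Icc 1 (k - 2), ccu K k i * ccy K k ^ i
        else
          ∑ i ∈ Icc 1 (k - 1), ccv K k i * ccy K k ^ i))

/-- `U_r` in the target, with dummy conventions `U_k = 1`, `U_{k−1} = 0`, and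
`U_r = 0` for `r ≤ 0` or `r > k`. -/
noncomputable def ccU (r : ℕ) : MvPolynomial (CCTgt k) K :=
  if h : 1 ≤ r ∧ r ≤ k - 2 then X (Sum.inl ⟨r - 1, by omega⟩)
  else if r = k then 1 else 0

/-- `V_r` in the target, with `V_r = 0` for `r ≤ 0` or `r ≥ k`. -/
noncomputable def ccV (r : ℕ) : MvPolynomial (CCTgt k) K :=
  if h : 1 ≤ r ∧ r ≤ k - 1 then X (Sum.inr (Sum.inl ⟨r - 1, by omega⟩)) else 0

/-- The target variable `W₁`. -/
noncomputable def ccW1 : MvPolynomial (CCTgt k) K := X (Sum.inr (Sum.inr 0))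

/-- The target variable `W₂`. -/
noncomputable def ccW2 : MvPolynomial (CCTgt k) K := X (Sum.inr (Sum.inr 1))

/-- The `V_i`-component `B̃_{i,j}` of the vector field `ξ̃_j`:
`B̃_i = k Σ_{r=1}^{i−1} U_{i+j−r} V_r − k Σ_{r=1}^{i} U_r V_{i+j−r}
        − (k−1)(k−j) U_j V_i + k V_{i+j} W₁ − k U_{i+j} W₂`. -/
noncomputable def Btilde (j i : ℕ) : MvPolynomial (CCTgt k) K :=
  (k : MvPolynomial (CCTgt k) K) *
      ∑ r ∈ Icc 1 (i - 1), ccU K k (i + j - r) * ccV K k r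
    - (k : MvPolynomial (CCTgt k) K) *
        ∑ r ∈ Icc 1 i, ccU K k r * ccV K k (i + j - r)
    - ((k - 1) * (k - j) : ℕ) * ccU K k j * ccV K k i
    + (k : MvPolynomial (CCTgt k) K) * ccV K k (i + j) * ccW1 K k
    - (k : MvPolynomial (CCTgt k) K) * ccU K k (i + j) * ccW2 K k

/-- The `W₂`-component `C̃₂ = −k V_j W₁ − (k−1)(k−j) U_j W₂` of `ξ̃_j`. -/
noncomputable def Ctilde2 (j : ℕ) : MvPolynomial (CCTgt k) K :=
  -((k : MvPolynomial (CCTgt k) K) * ccV K k j * ccW1 K k)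
    - ((k - 1) * (k - j) : ℕ) * ccU K k j * ccW2 K k

/-- The vector field `ξ̃_j` on the target: components `Ã_i = 0`, `B̃_i` as above,
`C̃₁ = 0` and `C̃₂` as above. -/
noncomputable def xiTilde (j : ℕ) : CCTgt k → MvPolynomial (CCTgt k) K :=
  Sum.elim (fun _ => 0)
    (Sum.elim (fun i => Btilde K k j (i + 1))
      (fun w => if w = (0 : Fin 2) then 0 else Ctilde2 K k j))

/-- The lowerable field `η_j` on the domain: `a_i = 0`, `b_i = B̃_i ∘ φ_k`
(substituting `U_r ↦ u_r`, `V_r ↦ v_r`, `W₁, W₂ ↦` the last two components of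
`φ_k`), and `c = 0`. -/
noncomputable def etaLow (j : ℕ) : CCDom k → MvPolynomial (CCDom k) K :=
  Sum.elim (fun _ => 0)
    (Sum.elim (fun i => aeval (crossCap K k) (Btilde K k j (i + 1)))
      (fun _ => 0))

end Defs

section Helpers2
variable {K : Type*} [Field K]

lemma ccu_top (k : ℕ) (hk : 2 ≤ k) : ccu K k k = 1 := by
  unfold ccu; rw [dif_neg (by omega), if_pos rfl]

lemma ccu_pred (k : ℕ) (hk : 2 ≤ k) : ccu K k (k-1) = 0 := by
  unfold ccu; rw [dif_neg (by omega), if_neg (by omega)]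

lemma ccu_zero (k r : ℕ) (h : ¬ r ≤ k) : ccu K k r = 0 := by
  unfold ccu; rw [dif_neg (by omega), if_neg (by omega)]

lemma ccv_zero (k r : ℕ) (h : ¬ (1 ≤ r ∧ r ≤ k - 1)) : ccv K k r = 0 := by
  unfold ccv; rw [dif_neg h]

lemma aeval_ccU (k r : ℕ) : aeval (crossCap K k) (ccU K k r) = ccu K k r := by
  unfold ccU
  split_ifs with h h2
  · rw [aeval_X]
    simp only [crossCap, Sum.elim_inl]
    congr 1
    omega
  · subst h2
    simp only [map_one]
    unfold ccu
    rw [dif_neg (by omega), if_pos rfl]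
  · simp only [map_zero]
    unfold ccu
    rw [dif_neg h, if_neg h2]

lemma aeval_ccV (k r : ℕ) : aeval (crossCap K k) (ccV K k r) = ccv K k r := by
  unfold ccV
  split_ifs with h
  · rw [aeval_X]
    simp only [crossCap, Sum.elim_inr, Sum.elim_inl]
    congr 1
    omega
  · simp only [map_zero]
    unfold ccv
    rw [dif_neg h]

lemma aeval_ccW1 (k : ℕ) : aeval (crossCap K k) (ccW1 K k) =
    crossCap K k (Sum.inr (Sum.inr 0)) := by
  unfold ccW1; rw [aeval_X]

lemma aeval_ccW2 (k : ℕ) : aeval (crossCap K k) (ccW2 K k) =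
    crossCap K k (Sum.inr (Sum.inr 1)) := by
  unfold ccW2; rw [aeval_X]

lemma pderiv_ccu (k r : ℕ) (s : Sum (Fin (k-1)) Unit) :
    pderiv (Sum.inr s : CCDom k) (ccu K k r) = 0 := by
  unfold ccu
  split_ifs with h
  · exact pderiv_X_of_ne (by simp)
  · exact pderiv_one
  · exact (pderiv _).map_zero

lemma pderiv_ccy (k : ℕ) (s : Fin (k-1)) :
    pderiv (Sum.inr (Sum.inl s) : CCDom k) (ccy K k) = 0 := by
  unfold ccy
  exact pderiv_X_of_ne (by simp)

lemma pderiv_ccv (k r : ℕ) (t : Fin (k-1)) :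
    pderiv (Sum.inr (Sum.inl t) : CCDom k) (ccv K k r)
      = if r = (t:ℕ)+1 then 1 else 0 := by
  unfold ccv
  split_ifs with h h2 h2
  · rw [pderiv_X]
    have : (Sum.inr (Sum.inl (⟨r-1, by omega⟩ : Fin (k-1))) : CCDom k)
        = Sum.inr (Sum.inl t) := by
      simp only [Sum.inr.injEq, Sum.inl.injEq, Fin.ext_iff]; omega
    rw [this, Pi.single_eq_same]
  · rw [pderiv_X_of_ne]
    simp only [ne_eq, Sum.inr.injEq, Sum.inl.injEq, Fin.ext_iff]
    omega
  · exact absurd ⟨by omega, by omega⟩ h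
  · exact (pderiv _).map_zero

lemma crossCap_F (k : ℕ) (hk : 2 ≤ k) :
    crossCap K k (Sum.inr (Sum.inr 0)) = ∑ a ∈ Icc 1 k, ccu K k a * ccy K k ^ a := by
  have e1 : Icc 1 k = insert k (Icc 1 (k-1)) := by
    ext x; simp only [mem_Icc, mem_insert]; omega
  have e2 : Icc 1 (k-1) = insert (k-1) (Icc 1 (k-2)) := by
    ext x; simp only [mem_Icc, mem_insert]; omega
  rw [e1, sum_insert (by simp only [mem_Icc]; omega), e2,
    sum_insert (by simp only [mem_Icc]; omega), ccu_top k hk, ccu_pred k hk]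
  simp only [crossCap, Sum.elim_inr, if_true]
  ring

lemma crossCap_G (k : ℕ) :
    crossCap K k (Sum.inr (Sum.inr 1)) = ∑ b ∈ Icc 1 (k-1), ccv K k b * ccy K k ^ b := by
  simp only [crossCap, Sum.elim_inr]
  rw [if_neg (by decide)]

lemma pderiv_F (k : ℕ) (hk : 2 ≤ k) (t : Fin (k-1)) :
    pderiv (Sum.inr (Sum.inl t) : CCDom k) (crossCap K k (Sum.inr (Sum.inr 0))) = 0 := by
  rw [crossCap_F k hk, map_sum]
  refine Finset.sum_eq_zero fun a _ => ?_
  rw [pderiv_mul, pderiv_ccu, pderiv_pow, pderiv_ccy]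
  ring

lemma pderiv_G (k : ℕ) (hk : 2 ≤ k) (t : Fin (k-1)) :
    pderiv (Sum.inr (Sum.inl t) : CCDom k) (crossCap K k (Sum.inr (Sum.inr 1)))
      = ccy K k ^ ((t:ℕ)+1) := by
  rw [crossCap_G k, map_sum]
  have : ∀ b ∈ Icc 1 (k-1),
      pderiv (Sum.inr (Sum.inl t) : CCDom k) (ccv K k b * ccy K k ^ b)
        = if b = (t:ℕ)+1 then ccy K k ^ b else 0 := by
    intro b _
    rw [pderiv_mul, pderiv_ccv, pderiv_pow, pderiv_ccy, ite_mul, one_mul, zero_mul,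
      mul_zero, mul_zero, add_zero]
  rw [Finset.sum_congr rfl this, Finset.sum_ite_eq' (Icc 1 (k-1)) ((t:ℕ)+1)]
  rw [if_pos (by simp only [mem_Icc]; omega)]

/-- auxiliary summand for the reindexed double sums -/
noncomputable def TT (K : Type*) [Field K] (k j : ℕ) (p : ℕ × ℕ) :
    MvPolynomial (CCDom k) K :=
  ccu K k p.1 * ccv K k p.2 * ccy K k ^ (p.1 + p.2 - j)

lemma keyzero (k j : ℕ) (hk : 2 ≤ k) (hj1 : 1 ≤ j) (hj2 : j ≤ k - 1) :
    ∑ p ∈ (Icc 1 (2*k) ×ˢ Icc 1 (2*k)).filter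
        (fun p => j+1 ≤ p.1 ∧ 1 ≤ p.2 ∧ p.1 + p.2 ≤ k+j-1), TT K k j p
    - ∑ p ∈ (Icc 1 (2*k) ×ˢ Icc 1 (2*k)).filter
        (fun p => 1 ≤ p.1 ∧ j ≤ p.2 ∧ p.1 + p.2 ≤ k+j-1 ∧ j+1 ≤ p.1 + p.2), TT K k j p
    + ∑ p ∈ (Icc 1 (2*k) ×ˢ Icc 1 (2*k)).filter
        (fun p => 1 ≤ p.1 ∧ p.1 ≤ k ∧ j+1 ≤ p.2 ∧ p.2 ≤ k+j-1), TT K k j p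
    - ∑ p ∈ (Icc 1 (2*k) ×ˢ Icc 1 (2*k)).filter
        (fun p => j+1 ≤ p.1 ∧ p.1 ≤ k+j-1 ∧ 1 ≤ p.2 ∧ p.2 ≤ k-1), TT K k j p
    + ∑ p ∈ (Icc 1 (2*k) ×ˢ Icc 1 (2*k)).filter
        (fun p => 1 ≤ p.1 ∧ p.1 ≤ k ∧ p.2 = j), TT K k j p
    = 0 := by
  simp only [Finset.sum_filter, ← Finset.sum_sub_distrib, ← Finset.sum_add_distrib]
  refine Finset.sum_eq_zero ?_
  rintro ⟨a, b⟩ hp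
  dsimp only
  rcases eq_or_ne (ccu K k a) 0 with h0 | hne
  · have hT : TT K k j (a, b) = 0 := by simp [TT, h0]
    simp [hT]
  rcases eq_or_ne (ccv K k b) 0 with h0 | hne2
  · have hT : TT K k j (a, b) = 0 := by simp [TT, h0]
    simp [hT]
  have ha : a ≤ k := by by_contra h; exact hne (ccu_zero k a h)
  have hb2 : 1 ≤ b ∧ b ≤ k - 1 := by by_contra h; exact hne2 (ccv_zero k b h)
  split_ifs <;> first | ring1 | (exfalso; omega)

end Helpers2

section KeyLemma
variable {K : Type*} [Field K]

lemma hA1 (k j : ℕ) (hk : 2 ≤ k) (hj1 : 1 ≤ j) (hj2 : j ≤ k - 1) :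
    ∑ i ∈ Icc 1 (k-1), ccy K k ^ i *
        ∑ r ∈ Icc 1 (i-1), ccu K k (i+j-r) * ccv K k r
      = ∑ p ∈ (Icc 1 (2*k) ×ˢ Icc 1 (2*k)).filter
          (fun p => j+1 ≤ p.1 ∧ 1 ≤ p.2 ∧ p.1 + p.2 ≤ k+j-1), TT K k j p := by
  simp_rw [Finset.mul_sum]
  rw [Finset.sum_sigma' (Icc 1 (k-1)) (fun i => Icc 1 (i-1))
    (fun i r => ccy K k ^ i * (ccu K k (i+j-r) * ccv K k r))]
  refine Finset.sum_nbij' (fun p => (p.1 + j - p.2, p.2)) (fun p => ⟨p.1 + p.2 - j, p.2⟩)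
    ?_ ?_ ?_ ?_ ?_
  · rintro ⟨i, r⟩ hp
    simp only [Finset.mem_sigma, mem_Icc] at hp
    simp only [mem_filter, mem_product, mem_Icc]
    omega
  · rintro ⟨a, b⟩ hp
    simp only [mem_filter, mem_product, mem_Icc] at hp
    simp only [Finset.mem_sigma, mem_Icc]
    omega
  · rintro ⟨i, r⟩ hp
    simp only [Finset.mem_sigma, mem_Icc] at hp
    dsimp only
    rw [show i + j - r + r - j = i from by omega]
  · rintro ⟨a, b⟩ hp
    simp only [mem_filter, mem_product, mem_Icc] at hp
    dsimp only
    rw [Prod.ext_iff]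
    dsimp only
    constructor <;> omega
  · rintro ⟨i, r⟩ hp
    simp only [Finset.mem_sigma, mem_Icc] at hp
    dsimp only [TT]
    rw [show i + j - r + r - j = i from by omega]
    ring

lemma hA2 (k j : ℕ) (hk : 2 ≤ k) (hj1 : 1 ≤ j) (hj2 : j ≤ k - 1) :
    ∑ i ∈ Icc 1 (k-1), ccy K k ^ i *
        ∑ r ∈ Icc 1 i, ccu K k r * ccv K k (i+j-r)
      = ∑ p ∈ (Icc 1 (2*k) ×ˢ Icc 1 (2*k)).filter
          (fun p => 1 ≤ p.1 ∧ j ≤ p.2 ∧ p.1 + p.2 ≤ k+j-1 ∧ j+1 ≤ p.1 + p.2),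
          TT K k j p := by
  simp_rw [Finset.mul_sum]
  rw [Finset.sum_sigma' (Icc 1 (k-1)) (fun i => Icc 1 i)
    (fun i r => ccy K k ^ i * (ccu K k r * ccv K k (i+j-r)))]
  refine Finset.sum_nbij' (fun p => (p.2, p.1 + j - p.2)) (fun p => ⟨p.1 + p.2 - j, p.1⟩)
    ?_ ?_ ?_ ?_ ?_
  · rintro ⟨i, r⟩ hp
    simp only [Finset.mem_sigma, mem_Icc] at hp
    simp only [mem_filter, mem_product, mem_Icc]
    omega
  · rintro ⟨a, b⟩ hp
    simp only [mem_filter, mem_product, mem_Icc] at hp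
    simp only [Finset.mem_sigma, mem_Icc]
    omega
  · rintro ⟨i, r⟩ hp
    simp only [Finset.mem_sigma, mem_Icc] at hp
    dsimp only
    rw [show r + (i + j - r) - j = i from by omega]
  · rintro ⟨a, b⟩ hp
    simp only [mem_filter, mem_product, mem_Icc] at hp
    dsimp only
    rw [Prod.ext_iff]
    dsimp only
    constructor <;> omega
  · rintro ⟨i, r⟩ hp
    simp only [Finset.mem_sigma, mem_Icc] at hp
    dsimp only [TT]
    rw [show r + (i + j - r) - j = i from by omega]
    ring

lemma hA3 (k j : ℕ) (hk : 2 ≤ k) (hj1 : 1 ≤ j) (hj2 : j ≤ k - 1) :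
    ∑ i ∈ Icc 1 (k-1), ccy K k ^ i *
        (ccv K k (i+j) * ∑ a ∈ Icc 1 k, ccu K k a * ccy K k ^ a)
      = ∑ p ∈ (Icc 1 (2*k) ×ˢ Icc 1 (2*k)).filter
          (fun p => 1 ≤ p.1 ∧ p.1 ≤ k ∧ j+1 ≤ p.2 ∧ p.2 ≤ k+j-1), TT K k j p := by
  simp_rw [Finset.mul_sum]
  rw [← Finset.sum_product' (Icc 1 (k-1)) (Icc 1 k)
    (fun i a => ccy K k ^ i * (ccv K k (i+j) * (ccu K k a * ccy K k ^ a)))]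
  refine Finset.sum_nbij' (fun p => (p.2, p.1 + j)) (fun p => (p.2 - j, p.1)) ?_ ?_ ?_ ?_ ?_
  · rintro ⟨i, a⟩ hp
    simp only [mem_product, mem_Icc] at hp
    simp only [mem_filter, mem_product, mem_Icc]
    omega
  · rintro ⟨a, b⟩ hp
    simp only [mem_filter, mem_product, mem_Icc] at hp
    simp only [mem_product, mem_Icc]
    omega
  · rintro ⟨i, a⟩ hp
    simp only [mem_product, mem_Icc] at hp
    dsimp only
    rw [Prod.ext_iff]
    dsimp only
    constructor <;> omega
  · rintro ⟨a, b⟩ hp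
    simp only [mem_filter, mem_product, mem_Icc] at hp
    dsimp only
    rw [Prod.ext_iff]
    dsimp only
    constructor <;> omega
  · rintro ⟨i, a⟩ hp
    simp only [mem_product, mem_Icc] at hp
    dsimp only [TT]
    rw [show a + (i + j) - j = a + i from by omega]
    rw [pow_add]
    ring

lemma hA4 (k j : ℕ) (hk : 2 ≤ k) (hj1 : 1 ≤ j) (hj2 : j ≤ k - 1) :
    ∑ i ∈ Icc 1 (k-1), ccy K k ^ i *
        (ccu K k (i+j) * ∑ b ∈ Icc 1 (k-1), ccv K k b * ccy K k ^ b)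
      = ∑ p ∈ (Icc 1 (2*k) ×ˢ Icc 1 (2*k)).filter
          (fun p => j+1 ≤ p.1 ∧ p.1 ≤ k+j-1 ∧ 1 ≤ p.2 ∧ p.2 ≤ k-1), TT K k j p := by
  simp_rw [Finset.mul_sum]
  rw [← Finset.sum_product' (Icc 1 (k-1)) (Icc 1 (k-1))
    (fun i b => ccy K k ^ i * (ccu K k (i+j) * (ccv K k b * ccy K k ^ b)))]
  refine Finset.sum_nbij' (fun p => (p.1 + j, p.2)) (fun p => (p.1 - j, p.2)) ?_ ?_ ?_ ?_ ?_
  · rintro ⟨i, b⟩ hp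
    simp only [mem_product, mem_Icc] at hp
    simp only [mem_filter, mem_product, mem_Icc]
    omega
  · rintro ⟨a, b⟩ hp
    simp only [mem_filter, mem_product, mem_Icc] at hp
    simp only [mem_product, mem_Icc]
    omega
  · rintro ⟨i, b⟩ hp
    simp only [mem_product, mem_Icc] at hp
    dsimp only
    rw [Prod.ext_iff]
    dsimp only
    constructor <;> omega
  · rintro ⟨a, b⟩ hp
    simp only [mem_filter, mem_product, mem_Icc] at hp
    dsimp only
    rw [Prod.ext_iff]
    dsimp only
    constructor <;> omega
  · rintro ⟨i, b⟩ hp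
    simp only [mem_product, mem_Icc] at hp
    dsimp only [TT]
    rw [show i + j + b - j = i + b from by omega]
    rw [pow_add]
    ring

lemma hA5 (k j : ℕ) (hk : 2 ≤ k) (hj1 : 1 ≤ j) (hj2 : j ≤ k - 1) :
    ccv K k j * ∑ a ∈ Icc 1 k, ccu K k a * ccy K k ^ a
      = ∑ p ∈ (Icc 1 (2*k) ×ˢ Icc 1 (2*k)).filter
          (fun p => 1 ≤ p.1 ∧ p.1 ≤ k ∧ p.2 = j), TT K k j p := by
  rw [Finset.mul_sum]
  refine Finset.sum_nbij' (fun a => (a, j)) (fun p => p.1) ?_ ?_ ?_ ?_ ?_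
  · intro a ha
    simp only [mem_Icc] at ha
    simp only [mem_filter, mem_product, mem_Icc, and_true]
    omega
  · rintro ⟨a, b⟩ hp
    simp only [mem_filter, mem_product, mem_Icc] at hp
    simp only [mem_Icc]
    omega
  · intro a ha
    rfl
  · rintro ⟨a, b⟩ hp
    simp only [mem_filter, mem_product, mem_Icc] at hp
    dsimp only
    rw [Prod.ext_iff]
    dsimp only
    constructor <;> omega
  · intro a ha
    dsimp only [TT]
    rw [show a + j - j = a from by omega]
    ring

lemma key (k j : ℕ) (hk : 2 ≤ k) (hj1 : 1 ≤ j) (hj2 : j ≤ k - 1) :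
    ∑ i ∈ Icc 1 (k-1), ccy K k ^ i * (aeval (crossCap K k) (Btilde K k j i))
      = aeval (crossCap K k) (Ctilde2 K k j) := by
  have hb : ∀ i : ℕ, aeval (crossCap K k) (Btilde K k j i)
      = (k : MvPolynomial (CCDom k) K) * ∑ r ∈ Icc 1 (i-1), ccu K k (i+j-r) * ccv K k r
        - (k : MvPolynomial (CCDom k) K) * ∑ r ∈ Icc 1 i, ccu K k r * ccv K k (i+j-r)
        - ((k-1)*(k-j) : ℕ) * ccu K k j * ccv K k i
        + (k : MvPolynomial (CCDom k) K) * ccv K k (i+j) *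
            (∑ a ∈ Icc 1 k, ccu K k a * ccy K k ^ a)
        - (k : MvPolynomial (CCDom k) K) * ccu K k (i+j) *
            (∑ b ∈ Icc 1 (k-1), ccv K k b * ccy K k ^ b) := by
    intro i
    simp only [Btilde, map_sub, map_add, map_mul, map_sum, map_natCast,
      aeval_ccU, aeval_ccV, aeval_ccW1, aeval_ccW2, crossCap_F k hk, crossCap_G k]
  have hC : aeval (crossCap K k) (Ctilde2 K k j)
      = -((k : MvPolynomial (CCDom k) K) * ccv K k j *
            (∑ a ∈ Icc 1 k, ccu K k a * ccy K k ^ a))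
        - ((k-1)*(k-j) : ℕ) * ccu K k j *
            (∑ b ∈ Icc 1 (k-1), ccv K k b * ccy K k ^ b) := by
    simp only [Ctilde2, map_sub, map_neg, map_mul, map_natCast,
      aeval_ccU, aeval_ccV, aeval_ccW1, aeval_ccW2, crossCap_F k hk, crossCap_G k]
  have expand : ∀ i ∈ Icc 1 (k-1),
      ccy K k ^ i * (aeval (crossCap K k) (Btilde K k j i))
      = (k : MvPolynomial (CCDom k) K) *
            (ccy K k ^ i * ∑ r ∈ Icc 1 (i-1), ccu K k (i+j-r) * ccv K k r)
        - (k : MvPolynomial (CCDom k) K) *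
            (ccy K k ^ i * ∑ r ∈ Icc 1 i, ccu K k r * ccv K k (i+j-r))
        - ((k-1)*(k-j) : ℕ) * (ccy K k ^ i * (ccu K k j * ccv K k i))
        + (k : MvPolynomial (CCDom k) K) *
            (ccy K k ^ i * (ccv K k (i+j) * ∑ a ∈ Icc 1 k, ccu K k a * ccy K k ^ a))
        - (k : MvPolynomial (CCDom k) K) *
            (ccy K k ^ i * (ccu K k (i+j) * ∑ b ∈ Icc 1 (k-1), ccv K k b * ccy K k ^ b)) := by
    intro i _
    rw [hb i]
    ring
  rw [Finset.sum_congr rfl expand]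
  simp only [Finset.sum_sub_distrib, Finset.sum_add_distrib, ← Finset.mul_sum]
  have hA5' : ∑ i ∈ Icc 1 (k-1), ccy K k ^ i * (ccu K k j * ccv K k i)
      = ccu K k j * ∑ b ∈ Icc 1 (k-1), ccv K k b * ccy K k ^ b := by
    rw [Finset.mul_sum]
    exact Finset.sum_congr rfl fun i _ => by ring
  rw [hA1 (K := K) k j hk hj1 hj2]
  rw [hA2 (K := K) k j hk hj1 hj2]
  rw [hA3 (K := K) k j hk hj1 hj2]
  rw [hA4 (K := K) k j hk hj1 hj2]
  rw [hA5']
  rw [hC]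
  linear_combination (k : MvPolynomial (CCDom k) K) * keyzero (K := K) k j hk hj1 hj2
    + (k : MvPolynomial (CCDom k) K) * hA5 (K := K) k j hk hj1 hj2

end KeyLemma



/-- for `k ≥ 2` and `1 ≤ j ≤ k−1`, the vector field `ξ̃_j` is liftable
over the minimal cross cap map `φ_k`, with lowerable field `η_j`:
`Dφ_k · η_j = ξ̃_j ∘ φ_k`, i.e. for every target coordinate `m`,
`∑ s, ∂(φ_k)_m/∂x_s · (η_j)_s = (ξ̃_j)_m ∘ φ_k`. -/
theorem firstFamily_liftable {K : Type*} [Field K] (k j : ℕ)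
    (hk : 2 ≤ k) (hj1 : 1 ≤ j) (hj2 : j ≤ k - 1) :
    ∀ m : CCTgt k,
      ∑ s : CCDom k, pderiv s (crossCap K k m) * etaLow K k j s
        = aeval (crossCap K k) (xiTilde K k j m) := by
  intro m
  have hL : ∑ s : CCDom k, pderiv s (crossCap K k m) * etaLow K k j s
      = ∑ t : Fin (k-1), pderiv (Sum.inr (Sum.inl t) : CCDom k) (crossCap K k m) *
          aeval (crossCap K k) (Btilde K k j ((t:ℕ) + 1)) := by
    rw [Fintype.sum_sum_type, Fintype.sum_sum_type]
    simp only [etaLow, Sum.elim_inl, Sum.elim_inr, mul_zero, Finset.sum_const_zero,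
      zero_add, add_zero]
  rw [hL]
  obtain (i | (i | w)) := m
  · -- target coordinate U_i
    have hx : xiTilde K k j (Sum.inl i) = 0 := rfl
    rw [hx, map_zero, Finset.sum_eq_zero]
    intro t _
    have hc : crossCap K k (Sum.inl i) = ccu K k ((i:ℕ)+1) := rfl
    rw [hc, pderiv_ccu, zero_mul]
  · -- target coordinate V_i
    have hx : xiTilde K k j (Sum.inr (Sum.inl i)) = Btilde K k j ((i:ℕ)+1) := rfl
    rw [hx]
    have hterm : ∀ t : Fin (k-1),
        pderiv (Sum.inr (Sum.inl t) : CCDom k) (crossCap K k (Sum.inr (Sum.inl i))) *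
          aeval (crossCap K k) (Btilde K k j ((t:ℕ) + 1))
        = if t = i then aeval (crossCap K k) (Btilde K k j ((t:ℕ) + 1)) else 0 := by
      intro t
      have hc : crossCap K k (Sum.inr (Sum.inl i)) = ccv K k ((i:ℕ)+1) := rfl
      rw [hc, pderiv_ccv, ite_mul, one_mul, zero_mul]
      congr 1
      simp only [Fin.ext_iff, eq_iff_iff]
      omega
    rw [Finset.sum_congr rfl (fun t _ => hterm t), Finset.sum_ite_eq' Finset.univ i]
    simp only [Finset.mem_univ, if_true]
  · -- target coordinates W₁, W₂
    by_cases hw : w = 0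
    · subst hw
      have hx : xiTilde K k j (Sum.inr (Sum.inr 0)) = 0 := by
        simp only [xiTilde, Sum.elim_inr]
        exact if_pos trivial
      rw [hx, map_zero, Finset.sum_eq_zero]
      intro t _
      rw [pderiv_F k hk t, zero_mul]
    · have hv : (w:ℕ) ≠ 0 := fun h => hw (Fin.ext h)
      have hw1 : w = 1 := Fin.ext (by omega)
      subst hw1
      have hR : xiTilde K k j (Sum.inr (Sum.inr 1)) = Ctilde2 K k j := by
        simp only [xiTilde, Sum.elim_inr]
        rw [if_neg (by decide)]
      rw [hR]
      calc ∑ t : Fin (k-1), pderiv (Sum.inr (Sum.inl t) : CCDom k)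
              (crossCap K k (Sum.inr (Sum.inr 1))) *
              aeval (crossCap K k) (Btilde K k j ((t:ℕ) + 1))
          = ∑ t : Fin (k-1), ccy K k ^ ((t:ℕ)+1) *
              aeval (crossCap K k) (Btilde K k j ((t:ℕ) + 1)) :=
            Finset.sum_congr rfl fun t _ => by rw [pderiv_G k hk t]
        _ = ∑ i ∈ Icc 1 (k-1), ccy K k ^ i * aeval (crossCap K k) (Btilde K k j i) := by
            rw [Fin.sum_univ_eq_sum_range
              (fun t => ccy K k ^ (t+1) * aeval (crossCap K k) (Btilde K k j (t+1)))]
            refine Finset.sum_nbij' (fun t => t + 1) (fun t => t - 1) ?_ ?_ ?_ ?_ ?_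
            · intro t ht
              simp only [Finset.mem_range] at ht
              simp only [mem_Icc]
              omega
            · intro t ht
              simp only [mem_Icc] at ht
              simp only [Finset.mem_range]
              omega
            · intro t ht
              omega
            · intro t ht
              simp only [mem_Icc] at ht
              omega
            · intro t ht
              rfl
        _ = aeval (crossCap K k) (Ctilde2 K k j) := key k j hk hj1 hj2
end
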